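/- Let ρ₁,…,ρₙ be positive definite density matrices, p a probability vector, and suppose σ is a positive definite density matrix satisfying the fixed point equation f(σ)·σ = Σᵢ pᵢ √(σ^{1/2} ρᵢ σ^{1/2}), where f(σ) = Σᵢ pᵢ F(ρᵢ,σ). Then f(σ)² ≤ Σ_{i,j} pᵢ pⱼ F(ρᵢ, ρⱼ). -/

import Mathlib

open Matrix BigOperators Finset ComplexOrder

variable {d n : ℕ}

open Classical in
/-- The positive semidefinite square root (zero if not PSD). -/
noncomputable def psqrt (A : Matrix (Fin d) (Fin d) ℂ) : Matrix (Fin d) (Fin d) ℂ :=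
  if h : A.PosSemidef then
    (h.1.eigenvectorUnitary : Matrix (Fin d) (Fin d) ℂ) *
      diagonal (fun i => ((Real.sqrt (h.1.eigenvalues i) : ℝ) : ℂ)) *
      (star h.1.eigenvectorUnitary : Matrix (Fin d) (Fin d) ℂ)
  else 0

/-- Trace norm ‖A‖₁ = Tr √(A*A). -/
noncomputable def traceNorm (A : Matrix (Fin d) (Fin d) ℂ) : ℝ :=
  ((psqrt (Aᴴ * A)).trace).re

/-- Fidelity F(ρ,σ) = Tr √(σ^{1/2} ρ σ^{1/2}). -/
noncomputable def fid (ρ σ : Matrix (Fin d) (Fin d) ℂ) : ℝ :=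
  ((psqrt (psqrt σ * ρ * psqrt σ)).trace).re

/-- Density matrix: positive semidefinite with unit trace. -/
def IsDensity (ρ : Matrix (Fin d) (Fin d) ℂ) : Prop := ρ.PosSemidef ∧ ρ.trace = 1

/-- Contraction: spectral norm at most one, i.e. 1 - UᴴU ⪰ 0. -/
def IsContraction (U : Matrix (Fin d) (Fin d) ℂ) : Prop := (1 - Uᴴ * U).PosSemidef

/-- Probability vector. -/
def IsProbVec (p : Fin n → ℝ) : Prop := (∀ i, 0 ≤ p i) ∧ ∑ i, p i = 1

variable {A B P U W : Matrix (Fin d) (Fin d) ℂ}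
lemma psqrt_posSemidef (h : A.PosSemidef) : (psqrt A).PosSemidef := by
  rw [psqrt, dif_pos h]
  exact (posSemidef_diagonal_iff.2 fun i => by
    simpa using Real.sqrt_nonneg (h.1.eigenvalues i)).mul_mul_conjTranspose_same _
lemma psqrt_mul_self (h : A.PosSemidef) : psqrt A * psqrt A = A := by
  rw [psqrt, dif_pos h]
  set U : Matrix (Fin d) (Fin d) ℂ := (h.1.eigenvectorUnitary : Matrix (Fin d) (Fin d) ℂ) with hUdef
  have hU : star U * U = 1 := Matrix.mem_unitaryGroup_iff'.mp h.1.eigenvectorUnitary.2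
  set D := diagonal (fun i => ((Real.sqrt (h.1.eigenvalues i) : ℝ) : ℂ)) with hD
  calc U * D * star U * (U * D * star U) = U * (D * (star U * U) * D) * star U := by
        simp only [Matrix.mul_assoc]
    _ = U * diagonal (RCLike.ofReal ∘ h.1.eigenvalues) * star U := by
        rw [hU, Matrix.mul_one, hD, diagonal_mul_diagonal]
        have hfun : (fun i => ((Real.sqrt (h.1.eigenvalues i) : ℝ) : ℂ) *
            ((Real.sqrt (h.1.eigenvalues i) : ℝ) : ℂ)) = RCLike.ofReal ∘ h.1.eigenvalues := by
          funext i
          rw [← Complex.ofReal_mul, Real.mul_self_sqrt (h.eigenvalues_nonneg i)]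
          rfl
        rw [hfun]
    _ = A := by
        conv_rhs => rw [h.1.spectral_theorem]
        rfl
lemma psqrt_herm (h : A.PosSemidef) : (psqrt A)ᴴ = psqrt A :=
  (psqrt_posSemidef h).isHermitian
lemma trace_re_nonneg (h : A.PosSemidef) : 0 ≤ A.trace.re := by
  have h1 : ∀ i, 0 ≤ (A i i).re := fun i => by
    have := h.re_dotProduct_nonneg (Pi.single i 1)
    simpa [dotProduct, mulVec, Pi.single_apply] using this
  calc (0:ℝ) ≤ ∑ i, (A i i).re := Finset.sum_nonneg fun i _ => h1 i
    _ = A.trace.re := by simp [Matrix.trace, Matrix.diag, Complex.re_sum]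
lemma psqrt_det_isUnit (h : A.PosDef) : IsUnit (psqrt A).det := by
  have hdet : (psqrt A).det * (psqrt A).det = A.det := by
    rw [← Matrix.det_mul, psqrt_mul_self h.posSemidef]
  have hA : A.det ≠ 0 := ne_of_gt h.det_pos
  have : (psqrt A).det ≠ 0 := fun h0 => hA (by rw [← hdet, h0, zero_mul])
  exact Ne.isUnit this
lemma re_trace_unitary_mul_le (hP : P.PosSemidef) (hU : Uᴴ * U = 1) :
    ((U * P).trace).re ≤ P.trace.re := by
  have h0 : 0 ≤ (((1 - U) * P * (1 - U)ᴴ).trace).re :=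
    trace_re_nonneg (hP.mul_mul_conjTranspose_same _)
  have hexp : (1 - U) * P * (1 - U)ᴴ = P - U * P - P * Uᴴ + U * P * Uᴴ := by
    rw [conjTranspose_sub, conjTranspose_one]; noncomm_ring
  have h1 : (U * P * Uᴴ).trace = P.trace := by
    rw [trace_mul_cycle, hU, Matrix.one_mul]
  have h2 : (P * Uᴴ).trace = star ((U * P).trace) := by
    rw [← trace_conjTranspose, conjTranspose_mul, hP.isHermitian.eq]
  rw [hexp] at h0
  simp only [trace_sub, trace_add, h1, h2] at h0
  simp only [Complex.sub_re, Complex.add_re] at h0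
  rw [show star ((U * P).trace) = starRingEnd ℂ ((U * P).trace) from rfl,
    Complex.conj_re] at h0
  linarith
lemma re_trace_mul_unitary_le (hB : IsUnit B.det) (hW : Wᴴ * W = 1) :
    ((B * W).trace).re ≤ traceNorm B := by
  have hBtB : (Bᴴ * B).PosSemidef := posSemidef_conjTranspose_mul_self B
  set P := psqrt (Bᴴ * B) with hPdef
  have hP : P.PosSemidef := psqrt_posSemidef hBtB
  have hPP : P * P = Bᴴ * B := psqrt_mul_self hBtB
  have hPdet : IsUnit P.det := by
    have hd : P.det * P.det = Bᴴ.det * B.det := by rw [← Matrix.det_mul, hPP, Matrix.det_mul]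
    have hBd : B.det ≠ 0 := hB.ne_zero
    have hBHd : Bᴴ.det ≠ 0 := by
      rw [Matrix.det_conjTranspose]; exact star_ne_zero.2 hBd
    have : P.det ≠ 0 := fun h0 => (mul_ne_zero hBHd hBd) (by rw [← hd, h0, zero_mul])
    exact Ne.isUnit this
  have hPi : P⁻¹ * P = 1 := Matrix.nonsing_inv_mul P hPdet
  have hPi' : P * P⁻¹ = 1 := Matrix.mul_nonsing_inv P hPdet
  set V := B * P⁻¹ with hV
  have hVP : V * P = B := by
    rw [hV, Matrix.mul_assoc, hPi, Matrix.mul_one]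
  have hVH : Vᴴ = P⁻¹ * Bᴴ := by
    rw [hV, conjTranspose_mul, Matrix.conjTranspose_nonsing_inv, hP.isHermitian.eq]
  have hVV : Vᴴ * V = 1 := by
    rw [hVH, hV]
    calc P⁻¹ * Bᴴ * (B * P⁻¹) = P⁻¹ * (Bᴴ * B) * P⁻¹ := by noncomm_ring
      _ = P⁻¹ * (P * P) * P⁻¹ := by rw [hPP]
      _ = (P⁻¹ * P) * (P * P⁻¹) := by noncomm_ring
      _ = 1 := by rw [hPi, hPi', Matrix.one_mul]
  have hUU : (W * V)ᴴ * (W * V) = 1 := by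
    rw [conjTranspose_mul]
    calc Vᴴ * Wᴴ * (W * V) = Vᴴ * (Wᴴ * W) * V := by noncomm_ring
      _ = Vᴴ * V := by rw [hW, Matrix.mul_one]
      _ = 1 := hVV
  have htr : (B * W).trace = ((W * V) * P).trace := by
    rw [← hVP, trace_mul_cycle]
  rw [htr]
  exact re_trace_unitary_mul_le hP hUU

lemma term_bound {ρi ρj σ : Matrix (Fin d) (Fin d) ℂ} (hρi : ρi.PosDef) (hρj : ρj.PosDef)
    (hσ : σ.PosDef) :
    (((psqrt σ)⁻¹ * (psqrt (psqrt σ * ρi * psqrt σ) * psqrt (psqrt σ * ρj * psqrt σ)) *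
      (psqrt σ)⁻¹).trace).re ≤ fid ρj ρi := by
  have hss : psqrt σ * psqrt σ = σ := psqrt_mul_self hσ.posSemidef
  have hsH : (psqrt σ)ᴴ = psqrt σ := psqrt_herm hσ.posSemidef
  have hsdet : IsUnit (psqrt σ).det := psqrt_det_isUnit hσ
  set s := psqrt σ with hs_def
  have hsi : s⁻¹ * s = 1 := Matrix.nonsing_inv_mul s hsdet
  have hsi' : s * s⁻¹ = 1 := Matrix.mul_nonsing_inv s hsdet
  have hsiH : (s⁻¹)ᴴ = s⁻¹ := by rw [Matrix.conjTranspose_nonsing_inv, hsH]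
  have hconi : (s * ρi * s).PosSemidef := by
    simpa [hsH] using hρi.posSemidef.conjTranspose_mul_mul_same s
  have hconj : (s * ρj * s).PosSemidef := by
    simpa [hsH] using hρj.posSemidef.conjTranspose_mul_mul_same s
  set Ai := psqrt (s * ρi * s) with hAi_def
  set Aj := psqrt (s * ρj * s) with hAj_def
  have hAiH : Aiᴴ = Ai := psqrt_herm hconi
  have hAjH : Ajᴴ = Aj := psqrt_herm hconj
  have hAii : Ai * Ai = s * ρi * s := psqrt_mul_self hconi
  have hAjj : Aj * Aj = s * ρj * s := psqrt_mul_self hconj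
  set ri := psqrt ρi with hri_def
  set rj := psqrt ρj with hrj_def
  have hrii : ri * ri = ρi := psqrt_mul_self hρi.posSemidef
  have hrjj : rj * rj = ρj := psqrt_mul_self hρj.posSemidef
  have hriH : riᴴ = ri := psqrt_herm hρi.posSemidef
  have hrjH : rjᴴ = rj := psqrt_herm hρj.posSemidef
  have hridet : IsUnit ri.det := psqrt_det_isUnit hρi
  have hrjdet : IsUnit rj.det := psqrt_det_isUnit hρj
  have hrie : ri⁻¹ * ri = 1 := Matrix.nonsing_inv_mul ri hridet
  have hrie' : ri * ri⁻¹ = 1 := Matrix.mul_nonsing_inv ri hridet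
  have hrje : rj⁻¹ * rj = 1 := Matrix.nonsing_inv_mul rj hrjdet
  have hrje' : rj * rj⁻¹ = 1 := Matrix.mul_nonsing_inv rj hrjdet
  have hriiH : (ri⁻¹)ᴴ = ri⁻¹ := by rw [Matrix.conjTranspose_nonsing_inv, hriH]
  have hrjiH : (rj⁻¹)ᴴ = rj⁻¹ := by rw [Matrix.conjTranspose_nonsing_inv, hrjH]
  set Wi := ri⁻¹ * (s⁻¹ * Ai) with hWi_def
  set Wj := rj⁻¹ * (s⁻¹ * Aj) with hWj_def
  have hMi : s⁻¹ * Ai = ri * Wi := by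
    rw [hWi_def, ← Matrix.mul_assoc ri ri⁻¹ (s⁻¹ * Ai), hrie', Matrix.one_mul]
  have hMj : s⁻¹ * Aj = rj * Wj := by
    rw [hWj_def, ← Matrix.mul_assoc rj rj⁻¹ (s⁻¹ * Aj), hrje', Matrix.one_mul]
  have hMiH : (s⁻¹ * Ai)ᴴ = Ai * s⁻¹ := by rw [conjTranspose_mul, hAiH, hsiH]
  have hMjH : (s⁻¹ * Aj)ᴴ = Aj * s⁻¹ := by rw [conjTranspose_mul, hAjH, hsiH]
  have hMMi : (s⁻¹ * Ai) * (Ai * s⁻¹) = ρi := by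
    calc (s⁻¹ * Ai) * (Ai * s⁻¹) = s⁻¹ * (Ai * Ai) * s⁻¹ := by noncomm_ring
      _ = s⁻¹ * (s * ρi * s) * s⁻¹ := by rw [hAii]
      _ = (s⁻¹ * s) * ρi * (s * s⁻¹) := by noncomm_ring
      _ = ρi := by rw [hsi, hsi', Matrix.one_mul, Matrix.mul_one]
  have hMMj : (s⁻¹ * Aj) * (Aj * s⁻¹) = ρj := by
    calc (s⁻¹ * Aj) * (Aj * s⁻¹) = s⁻¹ * (Aj * Aj) * s⁻¹ := by noncomm_ring
      _ = s⁻¹ * (s * ρj * s) * s⁻¹ := by rw [hAjj]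
      _ = (s⁻¹ * s) * ρj * (s * s⁻¹) := by noncomm_ring
      _ = ρj := by rw [hsi, hsi', Matrix.one_mul, Matrix.mul_one]
  have hWiU : Wi * Wiᴴ = 1 := by
    rw [hWi_def, conjTranspose_mul, hMiH, hriiH]
    calc ri⁻¹ * (s⁻¹ * Ai) * (Ai * s⁻¹ * ri⁻¹)
        = ri⁻¹ * ((s⁻¹ * Ai) * (Ai * s⁻¹)) * ri⁻¹ := by noncomm_ring
      _ = ri⁻¹ * ρi * ri⁻¹ := by rw [hMMi]
      _ = ri⁻¹ * (ri * ri) * ri⁻¹ := by rw [hrii]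
      _ = (ri⁻¹ * ri) * (ri * ri⁻¹) := by noncomm_ring
      _ = 1 := by rw [hrie, hrie', Matrix.one_mul]
  have hWjU : Wj * Wjᴴ = 1 := by
    rw [hWj_def, conjTranspose_mul, hMjH, hrjiH]
    calc rj⁻¹ * (s⁻¹ * Aj) * (Aj * s⁻¹ * rj⁻¹)
        = rj⁻¹ * ((s⁻¹ * Aj) * (Aj * s⁻¹)) * rj⁻¹ := by noncomm_ring
      _ = rj⁻¹ * ρj * rj⁻¹ := by rw [hMMj]
      _ = rj⁻¹ * (rj * rj) * rj⁻¹ := by rw [hrjj]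
      _ = (rj⁻¹ * rj) * (rj * rj⁻¹) := by noncomm_ring
      _ = 1 := by rw [hrje, hrje', Matrix.one_mul]
  have hWiU' : Wiᴴ * Wi = 1 := mul_eq_one_comm.mp hWiU
  have hW : (Wi * Wjᴴ)ᴴ * (Wi * Wjᴴ) = 1 := by
    rw [conjTranspose_mul, conjTranspose_conjTranspose]
    calc Wj * Wiᴴ * (Wi * Wjᴴ) = Wj * (Wiᴴ * Wi) * Wjᴴ := by noncomm_ring
      _ = Wj * Wjᴴ := by rw [hWiU', Matrix.mul_one]
      _ = 1 := hWjU
  have hBdet : IsUnit (rj * ri).det := by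
    rw [Matrix.det_mul]; exact hrjdet.mul hridet
  have hAjs : Aj * s⁻¹ = Wjᴴ * rj := by
    rw [← hMjH, hMj, conjTranspose_mul, hrjH]
  have hmat : s⁻¹ * (Ai * Aj) * s⁻¹ = ri * (Wi * Wjᴴ) * rj := by
    calc s⁻¹ * (Ai * Aj) * s⁻¹ = (s⁻¹ * Ai) * (Aj * s⁻¹) := by noncomm_ring
      _ = (ri * Wi) * (Wjᴴ * rj) := by rw [hMi, hAjs]
      _ = ri * (Wi * Wjᴴ) * rj := by noncomm_ring
  have htr : (s⁻¹ * (Ai * Aj) * s⁻¹).trace = ((rj * ri) * (Wi * Wjᴴ)).trace := by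
    rw [hmat, trace_mul_cycle]
  have hb := re_trace_mul_unitary_le hBdet hW
  have hBB : (rj * ri)ᴴ * (rj * ri) = ri * ρj * ri := by
    rw [conjTranspose_mul, hriH, hrjH]
    calc ri * rj * (rj * ri) = ri * (rj * rj) * ri := by noncomm_ring
      _ = ri * ρj * ri := by rw [hrjj]
  have hTN : traceNorm (rj * ri) = fid ρj ρi := by
    rw [traceNorm, hBB, fid, ← hri_def]
  rw [htr, ← hTN]
  exact hb

/-- A fixed point of the average-fidelity fixed point equation satisfies the Product bound
with its own average fidelity squared. -/
theorem fixed_point_product_bound (ρ : Fin n → Matrix (Fin d) (Fin d) ℂ) (p : Fin n → ℝ)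
    (σ : Matrix (Fin d) (Fin d) ℂ)
    (hρ : ∀ i, (ρ i).PosDef ∧ (ρ i).trace = 1) (hp : IsProbVec p)
    (hσ : σ.PosDef) (hσ1 : σ.trace = 1)
    (hfix : ((∑ i, p i * fid (ρ i) σ : ℝ) : ℂ) • σ =
      ∑ i, (p i : ℂ) • psqrt (psqrt σ * ρ i * psqrt σ)) :
    (∑ i, p i * fid (ρ i) σ) ^ 2 ≤ ∑ i, ∑ j, p i * p j * fid (ρ i) (ρ j) := by
  obtain ⟨hp0, hp1⟩ := hp
  have hss : psqrt σ * psqrt σ = σ := psqrt_mul_self hσ.posSemidef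
  have hsdet : IsUnit (psqrt σ).det := psqrt_det_isUnit hσ
  set s := psqrt σ with hs_def
  have hsi : s⁻¹ * s = 1 := Matrix.nonsing_inv_mul s hsdet
  have hsi' : s * s⁻¹ = 1 := Matrix.mul_nonsing_inv s hsdet
  set f : ℝ := ∑ i, p i * fid (ρ i) σ with hf_def
  set S : Matrix (Fin d) (Fin d) ℂ := ∑ i, (p i : ℂ) • psqrt (s * ρ i * s) with hS_def
  have key1 : ((s⁻¹ * (S * S) * s⁻¹).trace).re = f ^ 2 := by
    rw [← hfix]
    have e1 : ((f:ℂ) • σ) * ((f:ℂ) • σ) = ((f:ℂ) * (f:ℂ)) • (σ * σ) :=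
      smul_mul_smul_comm _ _ _ _
    have e2 : s⁻¹ * (((f:ℂ) * (f:ℂ)) • (σ * σ)) * s⁻¹
        = ((f:ℂ) * (f:ℂ)) • (s⁻¹ * (σ * σ) * s⁻¹) := by
      rw [Matrix.mul_smul, Matrix.smul_mul]
    have e3 : s⁻¹ * (σ * σ) * s⁻¹ = σ := by
      rw [← hss]
      calc s⁻¹ * ((s * s) * (s * s)) * s⁻¹ = (s⁻¹ * s) * (s * s) * (s * s⁻¹) := by noncomm_ring
        _ = s * s := by rw [hsi, hsi', Matrix.one_mul, Matrix.mul_one]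
    rw [e1, e2, e3, trace_smul, hσ1, smul_eq_mul, mul_one, ← Complex.ofReal_mul,
      Complex.ofReal_re, pow_two]
  have key2 : ((s⁻¹ * (S * S) * s⁻¹).trace).re
      = ∑ i, ∑ j, p i * p j *
        ((s⁻¹ * (psqrt (s * ρ i * s) * psqrt (s * ρ j * s)) * s⁻¹).trace).re := by
    rw [hS_def, Finset.sum_mul_sum]
    simp only [Matrix.mul_sum, Matrix.sum_mul, Matrix.smul_mul, Matrix.mul_smul, smul_smul,
      trace_sum, trace_smul, Complex.re_sum, smul_eq_mul, ← Complex.ofReal_mul,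
      Complex.re_ofReal_mul, Matrix.mul_assoc]
    exact Finset.sum_congr rfl fun i _ => Finset.sum_congr rfl fun j _ => by ring
  have hbound : ∀ i j, ((s⁻¹ * (psqrt (s * ρ i * s) * psqrt (s * ρ j * s)) * s⁻¹).trace).re
      ≤ fid (ρ j) (ρ i) := by
    intro i j
    have := term_bound (hρ i).1 (hρ j).1 hσ
    rw [← hs_def] at this
    exact this
  have hstep : f ^ 2 ≤ ∑ i, ∑ j, p i * p j * fid (ρ j) (ρ i) := by
    rw [← key1, key2]
    refine Finset.sum_le_sum fun i _ => Finset.sum_le_sum fun j _ => ?_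
    exact mul_le_mul_of_nonneg_left (hbound i j) (mul_nonneg (hp0 i) (hp0 j))
  have hswap : ∑ i, ∑ j, p i * p j * fid (ρ j) (ρ i)
      = ∑ i, ∑ j, p i * p j * fid (ρ i) (ρ j) := by
    rw [Finset.sum_comm]
    exact Finset.sum_congr rfl fun i _ => Finset.sum_congr rfl fun j _ => by ring
  rw [← hswap]
  exact hstep
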